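/- For p ∈ [1,∞), the unfolding operator T_ε : L^p(Ω) → L^p(Ω × Y) is linear and bounded with ‖T_ε(φ)‖_{L^p(Ω×Y)} ≤ |Y|^{1/p} ‖φ‖_{L^p(Ω)} for every φ ∈ L^p(Ω). -/

import Mathlib

open MeasureTheory Set Filter

/-- The reference cell `Y = (−1/2, 1/2]³`. -/
def Ycell : Set (Fin 3 → ℝ) := {y | ∀ i, y i ∈ Set.Ioc (-(1/2) : ℝ) (1/2)}

/-- Integer-part map `[·]_Y : ℝ → ℤ` adapted to `Y = (−1/2,1/2]`: `z − [z]_Y ∈ (−1/2,1/2]`. -/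
noncomputable def nint (z : ℝ) : ℤ := ⌈z - 1/2⌉

/-- The cell `ε(ℓ + Y)`. -/
def cellY (ε : ℝ) (ℓ : Fin 3 → ℤ) : Set (Fin 3 → ℝ) :=
  {x | ∀ i, x i ∈ Set.Ioc (ε * ((ℓ i : ℝ) - 1/2)) (ε * ((ℓ i : ℝ) + 1/2))}

/-- `Ω_ε⁻`: the union of the ε-cells entirely contained in `Ω`. -/
def OmegaMinus (Ω : Set (Fin 3 → ℝ)) (ε : ℝ) : Set (Fin 3 → ℝ) :=
  ⋃ ℓ ∈ {ℓ : Fin 3 → ℤ | cellY ε ℓ ⊆ Ω}, cellY ε ℓ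

/-- The periodic unfolding operator `T_ε`:
`T_ε(φ)(x,y) = φ(ε[x/ε]_Y + εy)` on `Ω_ε⁻ × Y` and `0` on `(Ω \ Ω_ε⁻) × Y`. -/
noncomputable def unfold (ε : ℝ) (Ω : Set (Fin 3 → ℝ)) (φ : (Fin 3 → ℝ) → ℝ)
    (x y : Fin 3 → ℝ) : ℝ :=
  (OmegaMinus Ω ε).indicator (fun x => φ (fun i => ε * (nint (x i / ε) : ℝ) + ε * y i)) x

lemma nint_eq {z : ℝ} {ℓ : ℤ} (h1 : (ℓ : ℝ) - 1/2 < z) (h2 : z ≤ (ℓ : ℝ) + 1/2) :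
    nint z = ℓ := by
  unfold nint
  rw [Int.ceil_eq_iff]
  constructor <;> push_cast <;> linarith

lemma mem_cell_nint {ε : ℝ} (hε : 0 < ε) {ℓ : Fin 3 → ℤ} {x : Fin 3 → ℝ}
    (hx : x ∈ cellY ε ℓ) (i : Fin 3) : nint (x i / ε) = ℓ i := by
  obtain ⟨h1, h2⟩ := hx i
  refine nint_eq ?_ ?_
  · rw [lt_div_iff₀ hε]; linarith [h1]
  · rw [div_le_iff₀ hε]; linarith [h2]

lemma cellY_eq_pi (ε : ℝ) (ℓ : Fin 3 → ℤ) :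
    cellY ε ℓ = Set.pi Set.univ (fun i => Set.Ioc (ε * ((ℓ i : ℝ) - 1/2)) (ε * ((ℓ i : ℝ) + 1/2))) := by
  ext x; simp [cellY, Set.mem_pi]

lemma Ycell_eq_pi :
    Ycell = Set.pi Set.univ (fun _ : Fin 3 => Set.Ioc (-(1/2) : ℝ) (1/2)) := by
  ext x; simp [Ycell, Set.mem_pi]

lemma measurableSet_cellY (ε : ℝ) (ℓ : Fin 3 → ℤ) : MeasurableSet (cellY ε ℓ) := by
  rw [cellY_eq_pi]; exact MeasurableSet.univ_pi fun i => measurableSet_Ioc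

lemma measurableSet_Ycell : MeasurableSet Ycell := by
  rw [Ycell_eq_pi]; exact MeasurableSet.univ_pi fun i => measurableSet_Ioc

lemma volume_Ycell : volume Ycell = 1 := by
  rw [Ycell_eq_pi, volume_pi_pi]
  norm_num

lemma volume_cellY {ε : ℝ} (hε : 0 < ε) (ℓ : Fin 3 → ℤ) :
    volume (cellY ε ℓ) = ENNReal.ofReal ε ^ 3 := by
  rw [cellY_eq_pi, volume_pi_pi]
  have : ∀ i : Fin 3, volume (Set.Ioc (ε * ((ℓ i : ℝ) - 1/2)) (ε * ((ℓ i : ℝ) + 1/2)))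
      = ENNReal.ofReal ε := by
    intro i; rw [Real.volume_Ioc]; ring_nf
  simp only [this, Finset.prod_const, Finset.card_univ, Fintype.card_fin]

lemma measurableSet_OmegaMinus (Ω : Set (Fin 3 → ℝ)) (ε : ℝ) :
    MeasurableSet (OmegaMinus Ω ε) :=
  MeasurableSet.biUnion (Set.to_countable _) fun ℓ _ => measurableSet_cellY ε ℓ

lemma OmegaMinus_subset (Ω : Set (Fin 3 → ℝ)) (ε : ℝ) : OmegaMinus Ω ε ⊆ Ω :=
  Set.iUnion₂_subset fun _ h => h

lemma mem_Ycell_iff {ε : ℝ} (hε : 0 < ε) (ℓ : Fin 3 → ℤ) (y : Fin 3 → ℝ) :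
    y ∈ Ycell ↔ (ε • ((fun i => (ℓ i : ℝ)) + y)) ∈ cellY ε ℓ := by
  constructor
  · intro hy i
    obtain ⟨h1, h2⟩ := hy i
    constructor
    · simp only [Pi.smul_apply, Pi.add_apply, smul_eq_mul]
      have := mul_lt_mul_of_pos_left (show ((ℓ i : ℝ) - 1/2) < (ℓ i : ℝ) + y i by linarith) hε
      linarith
    · simp only [Pi.smul_apply, Pi.add_apply, smul_eq_mul]
      have := mul_le_mul_of_nonneg_left (show ((ℓ i : ℝ) + y i) ≤ (ℓ i : ℝ) + 1/2 by linarith) hε.le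
      linarith
  · intro hy i
    obtain ⟨h1, h2⟩ := hy i
    simp only [Pi.smul_apply, Pi.add_apply, smul_eq_mul] at h1 h2
    constructor
    · nlinarith
    · nlinarith

lemma cellY_disjoint {ε : ℝ} (hε : 0 < ε) {ℓ ℓ' : Fin 3 → ℤ} (h : ℓ ≠ ℓ') :
    Disjoint (cellY ε ℓ) (cellY ε ℓ') := by
  rw [Set.disjoint_left]
  intro x hx hx'
  exact h (funext fun i => (mem_cell_nint hε hx i).symm.trans (mem_cell_nint hε hx' i))

lemma inner_eq {ε : ℝ} (hε : 0 < ε) (Ω : Set (Fin 3 → ℝ)) (φ : (Fin 3 → ℝ) → ℝ)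
    {p : ℝ} (hp : 1 ≤ p) (x : Fin 3 → ℝ) :
    (∫ y in Ycell, |unfold ε Ω φ x y| ^ p) =
      (OmegaMinus Ω ε).indicator
        (fun x => (ε ^ 3)⁻¹ * ∫ z in cellY ε (fun i => nint (x i / ε)), |φ z| ^ p) x := by
  by_cases hx : x ∈ OmegaMinus Ω ε
  · obtain ⟨ℓ, -, hxc⟩ := Set.mem_iUnion₂.mp hx
    have hn : (fun i => nint (x i / ε)) = ℓ := funext (mem_cell_nint hε hxc)
    rw [Set.indicator_of_mem hx, hn]
    set L : Fin 3 → ℝ := fun i => (ℓ i : ℝ) with hL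
    set G : (Fin 3 → ℝ) → ℝ := (cellY ε ℓ).indicator (fun z => |φ z| ^ p) with hG
    have step1 : ∀ y : Fin 3 → ℝ, |unfold ε Ω φ x y| ^ p
        = (fun y => |φ (fun i => ε * (ℓ i : ℝ) + ε * y i)| ^ p) y := by
      intro y
      rw [unfold, Set.indicator_of_mem hx]
      have harg : (fun i => ε * (nint (x i / ε) : ℝ) + ε * y i)
          = fun i => ε * (ℓ i : ℝ) + ε * y i := by
        funext i; rw [mem_cell_nint hε hxc i]
      rw [harg]
    have step2 : ∀ y : Fin 3 → ℝ,
        Ycell.indicator (fun y => |φ (fun i => ε * (ℓ i : ℝ) + ε * y i)| ^ p) y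
          = G (ε • (L + y)) := by
      intro y
      have harg : (fun i => ε * (ℓ i : ℝ) + ε * y i) = ε • (L + y) := by
        funext i; simp [hL, mul_add]
      by_cases hy : y ∈ Ycell
      · rw [Set.indicator_of_mem hy, hG,
          Set.indicator_of_mem ((mem_Ycell_iff hε ℓ y).mp hy), harg]
      · rw [Set.indicator_of_notMem hy, hG, Set.indicator_of_notMem
          (fun hc => hy ((mem_Ycell_iff hε ℓ y).mpr hc))]
    calc (∫ y in Ycell, |unfold ε Ω φ x y| ^ p)
        = ∫ y in Ycell, |φ (fun i => ε * (ℓ i : ℝ) + ε * y i)| ^ p := by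
          exact setIntegral_congr_fun measurableSet_Ycell fun y _ => step1 y
      _ = ∫ y, Ycell.indicator (fun y => |φ (fun i => ε * (ℓ i : ℝ) + ε * y i)| ^ p) y :=
          (integral_indicator measurableSet_Ycell).symm
      _ = ∫ y, G (ε • (L + y)) := by simp_rw [step2]
      _ = ∫ y, G (ε • y) := integral_add_left_eq_self (fun v => G (ε • v)) L
      _ = (ε ^ Module.finrank ℝ (Fin 3 → ℝ))⁻¹ • ∫ v, G v := by
          rw [Measure.integral_comp_smul_of_nonneg volume (fun v => G v) ε (hR := hε.le)]
      _ = (ε ^ 3)⁻¹ * ∫ z in cellY ε ℓ, |φ z| ^ p := by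
          rw [hG, integral_indicator (measurableSet_cellY ε ℓ), smul_eq_mul,
            Module.finrank_fintype_fun_eq_card, Fintype.card_fin]
  · rw [Set.indicator_of_notMem hx]
    have : ∀ y : Fin 3 → ℝ, |unfold ε Ω φ x y| ^ p = 0 := by
      intro y
      rw [unfold, Set.indicator_of_notMem hx, abs_zero, Real.zero_rpow (by linarith)]
    simp_rw [this, integral_zero]

/-- For `p ∈ [1,∞)`, the unfolding operator `T_ε : L^p(Ω) → L^p(Ω × Y)` is linear and bounded:
`‖T_ε(φ)‖_{L^p(Ω×Y)} ≤ |Y|^{1/p} ‖φ‖_{L^p(Ω)}`, equivalently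
`∫_{Ω×Y} |T_ε(φ)|^p ≤ |Y| ∫_Ω |φ|^p`. -/
theorem stmt7 (Ω : Set (Fin 3 → ℝ)) (hΩo : IsOpen Ω) (hΩb : Bornology.IsBounded Ω)
    (ε : ℝ) (hε : 0 < ε) (p : ℝ) (hp : 1 ≤ p) (φ ψ : (Fin 3 → ℝ) → ℝ) (c : ℝ)
    (hφ : IntegrableOn (fun x => |φ x| ^ p) Ω) :
    (∀ x y, unfold ε Ω (fun z => φ z + ψ z) x y = unfold ε Ω φ x y + unfold ε Ω ψ x y) ∧
      (∀ x y, unfold ε Ω (fun z => c * φ z) x y = c * unfold ε Ω φ x y) ∧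
      (∫ x in Ω, ∫ y in Ycell, |unfold ε Ω φ x y| ^ p)
        ≤ (volume Ycell).toReal * ∫ x in Ω, |φ x| ^ p ∧
      ((∫ x in Ω, ∫ y in Ycell, |unfold ε Ω φ x y| ^ p) ^ (1 / p)
        ≤ (volume Ycell).toReal ^ (1 / p) * (∫ x in Ω, |φ x| ^ p) ^ (1 / p)) := by
  have hε3 : (0:ℝ) < ε ^ 3 := by positivity
  have hM : MeasurableSet (OmegaMinus Ω ε) := measurableSet_OmegaMinus Ω ε
  have hMsub : OmegaMinus Ω ε ⊆ Ω := OmegaMinus_subset Ω ε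
  have hg0 : ∀ z : Fin 3 → ℝ, 0 ≤ |φ z| ^ p := fun z => Real.rpow_nonneg (abs_nonneg _) p
  have hF0 : ∀ ℓ : Fin 3 → ℤ, 0 ≤ ∫ z in cellY ε ℓ, |φ z| ^ p := fun ℓ =>
    setIntegral_nonneg (measurableSet_cellY ε ℓ) fun z _ => hg0 z
  -- the function appearing inside the indicator
  set h' : (Fin 3 → ℝ) → ℝ :=
    fun x => (ε ^ 3)⁻¹ * ∫ z in cellY ε (fun i => nint (x i / ε)), |φ z| ^ p with hh'def
  have hh'0 : ∀ x, 0 ≤ h' x := fun x => mul_nonneg (by positivity) (hF0 _)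
  have hnm : Measurable (fun x : Fin 3 → ℝ => (fun i => nint (x i / ε))) :=
    measurable_pi_lambda _ fun i =>
      Int.measurable_ceil.comp (by fun_prop)
  have hh'm : Measurable h' :=
    measurable_const.mul ((measurable_of_countable
      (fun ℓ : Fin 3 → ℤ => ∫ z in cellY ε ℓ, |φ z| ^ p)).comp hnm)
  -- linearity
  have lin1 : ∀ x y, unfold ε Ω (fun z => φ z + ψ z) x y
      = unfold ε Ω φ x y + unfold ε Ω ψ x y := by
    intro x y
    by_cases hx : x ∈ OmegaMinus Ω ε
    · simp only [unfold, Set.indicator_of_mem hx]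
    · simp only [unfold, Set.indicator_of_notMem hx]; ring
  have lin2 : ∀ x y, unfold ε Ω (fun z => c * φ z) x y = c * unfold ε Ω φ x y := by
    intro x y
    by_cases hx : x ∈ OmegaMinus Ω ε
    · simp only [unfold, Set.indicator_of_mem hx]
    · simp only [unfold, Set.indicator_of_notMem hx]; ring
  -- the key estimate
  have hpd : Pairwise (Function.onFun Disjoint fun ℓ : {ℓ : Fin 3 → ℤ | cellY ε ℓ ⊆ Ω} =>
      cellY ε (ℓ : Fin 3 → ℤ)) := fun a b hab =>
    cellY_disjoint hε (Subtype.coe_ne_coe.mpr hab)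
  have hMU : OmegaMinus Ω ε = ⋃ ℓ : {ℓ : Fin 3 → ℤ | cellY ε ℓ ⊆ Ω}, cellY ε (ℓ : Fin 3 → ℤ) := by
    rw [OmegaMinus, Set.biUnion_eq_iUnion]
  have hterm : ∀ ℓ : Fin 3 → ℤ, cellY ε ℓ ⊆ Ω →
      (∫⁻ x in cellY ε ℓ, ENNReal.ofReal (h' x))
        = ∫⁻ z in cellY ε ℓ, ENNReal.ofReal (|φ z| ^ p) := by
    intro ℓ hsub
    have hcst : ∫⁻ x in cellY ε ℓ, ENNReal.ofReal (h' x)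
        = ENNReal.ofReal ((ε ^ 3)⁻¹ * ∫ z in cellY ε ℓ, |φ z| ^ p) * volume (cellY ε ℓ) := by
      have hpt : ∀ x ∈ cellY ε ℓ, ENNReal.ofReal (h' x)
          = ENNReal.ofReal ((ε ^ 3)⁻¹ * ∫ z in cellY ε ℓ, |φ z| ^ p) := by
        intro x hx
        simp only [hh'def]
        rw [show (fun i => nint (x i / ε)) = ℓ from funext (mem_cell_nint hε hx)]
      rw [setLIntegral_congr_fun (measurableSet_cellY ε ℓ) hpt,
        setLIntegral_const]
    rw [hcst, volume_cellY hε, ← ENNReal.ofReal_pow hε.le,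
      ← ENNReal.ofReal_mul (mul_nonneg (by positivity) (hF0 ℓ))]
    have : (ε ^ 3)⁻¹ * (∫ z in cellY ε ℓ, |φ z| ^ p) * ε ^ 3 = ∫ z in cellY ε ℓ, |φ z| ^ p := by
      field_simp
    rw [this, ofReal_integral_eq_lintegral_ofReal (hφ.mono_set hsub)
      (ae_of_all _ fun z => hg0 z)]
  have hMeq : (∫⁻ x in OmegaMinus Ω ε, ENNReal.ofReal (h' x))
      = ∫⁻ z in OmegaMinus Ω ε, ENNReal.ofReal (|φ z| ^ p) := by
    rw [hMU, lintegral_iUnion (fun ℓ => measurableSet_cellY ε _) hpd,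
      lintegral_iUnion (fun ℓ => measurableSet_cellY ε _) hpd]
    exact tsum_congr fun ℓ => hterm ℓ ℓ.2
  have hGint : ENNReal.ofReal (∫ x in Ω, |φ x| ^ p)
      = ∫⁻ x in Ω, ENNReal.ofReal (|φ x| ^ p) :=
    ofReal_integral_eq_lintegral_ofReal hφ (ae_of_all _ fun z => hg0 z)
  have key : (∫ x in Ω, ∫ y in Ycell, |unfold ε Ω φ x y| ^ p) ≤ ∫ x in Ω, |φ x| ^ p := by
    have hrew : (∫ x in Ω, ∫ y in Ycell, |unfold ε Ω φ x y| ^ p)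
        = ∫ x in Ω, (OmegaMinus Ω ε).indicator h' x := by
      exact integral_congr_ae (ae_of_all _ fun x => inner_eq hε Ω φ hp x)
    rw [hrew]
    have hnn : (0:(Fin 3 → ℝ) → ℝ) ≤ᵐ[volume.restrict Ω] (OmegaMinus Ω ε).indicator h' :=
      ae_of_all _ (Set.indicator_nonneg fun x _ => hh'0 x)
    rw [integral_eq_lintegral_of_nonneg_ae hnn (hh'm.indicator hM).aestronglyMeasurable]
    have h1 : ∀ x, ENNReal.ofReal ((OmegaMinus Ω ε).indicator h' x)
        = (OmegaMinus Ω ε).indicator (fun x => ENNReal.ofReal (h' x)) x := by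
      intro x
      by_cases hx : x ∈ OmegaMinus Ω ε <;> simp [hx]
    simp_rw [h1]
    rw [lintegral_indicator hM, Measure.restrict_restrict hM,
      Set.inter_eq_self_of_subset_left hMsub, hMeq]
    calc (∫⁻ z in OmegaMinus Ω ε, ENNReal.ofReal (|φ z| ^ p)).toReal
        ≤ (∫⁻ z in Ω, ENNReal.ofReal (|φ z| ^ p)).toReal := by
          refine ENNReal.toReal_mono ?_ (lintegral_mono_set hMsub)
          rw [← hGint]; exact ENNReal.ofReal_ne_top
      _ = ∫ x in Ω, |φ x| ^ p := by
          rw [← hGint, ENNReal.toReal_ofReal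
            (setIntegral_nonneg hΩo.measurableSet fun z _ => hg0 z)]
  have hY1 : (volume Ycell).toReal = 1 := by rw [volume_Ycell]; simp
  have key' : (∫ x in Ω, ∫ y in Ycell, |unfold ε Ω φ x y| ^ p)
      ≤ (volume Ycell).toReal * ∫ x in Ω, |φ x| ^ p := by
    rw [hY1, one_mul]; exact key
  refine ⟨lin1, lin2, key', ?_⟩
  have hL0 : 0 ≤ ∫ x in Ω, ∫ y in Ycell, |unfold ε Ω φ x y| ^ p :=
    setIntegral_nonneg hΩo.measurableSet fun x _ =>
      setIntegral_nonneg measurableSet_Ycell fun y _ => Real.rpow_nonneg (abs_nonneg _) p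
  calc (∫ x in Ω, ∫ y in Ycell, |unfold ε Ω φ x y| ^ p) ^ (1 / p)
      ≤ ((volume Ycell).toReal * ∫ x in Ω, |φ x| ^ p) ^ (1 / p) :=
        Real.rpow_le_rpow hL0 key' (by positivity)
    _ = (volume Ycell).toReal ^ (1 / p) * (∫ x in Ω, |φ x| ^ p) ^ (1 / p) :=
        Real.mul_rpow ENNReal.toReal_nonneg
          (setIntegral_nonneg hΩo.measurableSet fun z _ => hg0 z)
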